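/- Let m ∈ ℕ₀ and let 0 ≤ a < F^m have Zeckendorf digits d_1 = d_0 = 0. Then, as subsets of ℝ: (i) I_0(a;m) = I_0(a⊙φ; m+1) ∪ I_1(a⊙φ; m+1), i.e. [a‾/φ^m, (a+1)‾/φ^m) = [(a⊙φ)‾/φ^(m+1), (a⊙φ+1)‾/φ^(m+1)) ∪ [(a⊙φ+1)‾/φ^(m+1), (a⊙φ+2)‾/φ^(m+1)); (ii) I_1(a;m) = I_2(a⊙φ; m+1), i.e. [(a+1)‾/φ^m, (a+2)‾/φ^m) = [(a⊙φ+2)‾/φ^(m+1), (a⊙φ+3)‾/φ^(m+1)); and (iii) if moreover d_2 = 0 and a+3 ≤ F^m, then I_2(a;m) = I_1(a⊙φ^(−1); m−1) = I_0(a⊙φ+3; m+1) ∪ I_1(a⊙φ+3; m+1). -/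

import Mathlib

open Finset

/-- `F m` denotes `F^m := F_{m+2}`, the Fibonacci numbers with shifted index,
so `F^{-2} = 0`, `F^{-1} = 1`, `F^0 = 1`, `F^1 = 2`, … (and `F^m = 0` for `m < -2`). -/
def F (m : ℤ) : ℕ := Nat.fib (m + 2).toNat

lemma F_pos (m : ℤ) (h : -2 < m) : 0 < F m := Nat.fib_pos.mpr (by omega)

/-- The set of indices of the `1` digits in the (unique) Zeckendorf representation
`n = ∑_{j ∈ zeckSet n} F^j` (no two consecutive indices), computed greedily. -/
def zeckSet : ℕ → Finset ℕ
  | 0 => ∅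
  | (n + 1) =>
      insert (Nat.findGreatest (fun i => F i ≤ n + 1) (n + 1))
        (zeckSet (n + 1 - F (Nat.findGreatest (fun i => F i ≤ n + 1) (n + 1))))
decreasing_by exact Nat.sub_lt (Nat.succ_pos n) (F_pos _ (by omega))

/-- The golden ratio `φ = (1 + √5)/2`. -/
noncomputable def phi : ℝ := (1 + Real.sqrt 5) / 2

/-- `|n|`, the zeroth Zeckendorf digit of `n`. -/
def zd0 (n : ℕ) : ℕ := if 0 ∈ zeckSet n then 1 else 0

/-- `n‾ = ∑_j d_j φ^j`, the `n`-th whole number in base `φ`. -/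
noncomputable def zbar (n : ℕ) : ℝ := ∑ j ∈ zeckSet n, phi ^ j

/-- `n ⊙ φ^k = ∑_j d_j F^{j+k}`, the Zeckendorf digit shift. -/
def zshift (n : ℕ) (k : ℤ) : ℕ := ∑ j ∈ zeckSet n, F (j + k)

lemma F_eq (i : ℕ) : F (i : ℤ) = Nat.fib (i + 2) := by
  have h : ((i:ℤ) + 2).toNat = i + 2 := by omega
  simp [F, h]

lemma Fn_mono {i j : ℕ} (h : i ≤ j) : F (i:ℤ) ≤ F (j:ℤ) := by
  rw [F_eq, F_eq]; exact Nat.fib_mono (by omega)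

lemma Fn_pos (i : ℕ) : 0 < F (i:ℤ) := F_pos _ (by omega)

lemma le_Fn (i : ℕ) : i + 1 ≤ F (i:ℤ) := by
  rw [F_eq]
  induction i with
  | zero => simp
  | succ n ih =>
    have h1 : Nat.fib (n + 1 + 2) = Nat.fib (n + 1) + Nat.fib (n + 2) := by
      rw [show n + 1 + 2 = (n + 1) + 2 from rfl, Nat.fib_add_two]
    have h2 : 0 < Nat.fib (n + 1) := Nat.fib_pos.mpr (by omega)
    omega

lemma Fn_rec (i : ℕ) : F ((i + 2 : ℕ) : ℤ) = F (i:ℤ) + F ((i + 1 : ℕ):ℤ) := by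
  rw [F_eq, F_eq, F_eq, show i + 2 + 2 = (i + 2) + 2 from rfl, Nat.fib_add_two]

lemma Fn_lt_succ (i : ℕ) : F (i:ℤ) < F ((i + 1 : ℕ):ℤ) := by
  rw [F_eq, F_eq]
  have h1 : Nat.fib (i + 1 + 2) = Nat.fib (i + 1) + Nat.fib (i + 2) := by
    rw [show i + 1 + 2 = (i + 1) + 2 from rfl, Nat.fib_add_two]
  have h2 : 0 < Nat.fib (i + 1) := Nat.fib_pos.mpr (by omega)
  omega

def Valid (S : Finset ℕ) : Prop := ∀ j ∈ S, j + 1 ∉ S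

lemma sum_lt : ∀ M : ℕ, ∀ S : Finset ℕ, Valid S → (∀ j ∈ S, j ≤ M) →
    ∑ j ∈ S, F (j:ℤ) < F ((M + 1 : ℕ):ℤ) := by
  intro M
  induction M using Nat.strong_induction_on with
  | _ M ih =>
    intro S hS hle
    rcases S.eq_empty_or_nonempty with rfl | hne
    · simpa using Fn_pos (M+1)
    · set m := S.max' hne with hm
      have hmS : m ∈ S := S.max'_mem hne
      have hmM : m ≤ M := hle m hmS
      have hsplit : S = insert m (S.erase m) := (Finset.insert_erase hmS).symm
      have herase : ∀ j ∈ S.erase m, j + 2 ≤ m := by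
        intro j hj
        have hjS := Finset.mem_of_mem_erase hj
        have hjm : j ≤ m := S.le_max' j hjS
        have hne' : j ≠ m := Finset.ne_of_mem_erase hj
        have h1 : j + 1 ≠ m := by
          intro hc
          exact hS j hjS (hc ▸ hmS)
        omega
      have hmem : m ∉ S.erase m := Finset.notMem_erase m S
      have hsum : ∑ j ∈ S, F (j:ℤ) = F (m:ℤ) + ∑ j ∈ S.erase m, F (j:ℤ) := by
        conv_lhs => rw [hsplit]
        rw [Finset.sum_insert hmem]
      by_cases h2 : 2 ≤ m
      · have IH := ih (m-2) (by omega) (S.erase m)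
          (fun j hj hj' => hS j (Finset.mem_of_mem_erase hj)
            (Finset.mem_of_mem_erase hj'))
          (fun j hj => by have := herase j hj; omega)
        have hrec : F ((m - 1 : ℕ):ℤ) + F (m:ℤ) = F ((m + 1 : ℕ):ℤ) := by
          have := Fn_rec (m-1)
          rw [show m - 1 + 2 = m + 1 by omega, show m - 1 + 1 = m by omega] at this
          omega
        have : F (((m - 2) + 1 : ℕ):ℤ) = F ((m - 1 : ℕ):ℤ) := by
          congr 1; omega
        have hmono : F ((m + 1 : ℕ):ℤ) ≤ F ((M + 1 : ℕ):ℤ) := Fn_mono (by omega)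
        omega
      · have hempty : S.erase m = ∅ := by
          rw [Finset.eq_empty_iff_forall_notMem]
          intro j hj
          have := herase j hj
          omega
        have hlt : F (m:ℤ) < F ((m + 1 : ℕ):ℤ) := Fn_lt_succ m
        have hmono : F ((m + 1 : ℕ):ℤ) ≤ F ((M + 1 : ℕ):ℤ) := Fn_mono (by omega)
        rw [hsum, hempty, Finset.sum_empty]
        omega

lemma zeck_spec (n : ℕ) : ∑ j ∈ zeckSet n, F (j:ℤ) = n ∧ Valid (zeckSet n) ∧
    ∀ j ∈ zeckSet n, F (j:ℤ) ≤ n := by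
  induction n using Nat.strong_induction_on with
  | _ n ih =>
    match n with
    | 0 =>
      refine ⟨?_, ?_, ?_⟩ <;> rw [zeckSet] <;> simp [Valid]
    | (k+1) =>
      rw [zeckSet]
      set M := Nat.findGreatest (fun i => F (i:ℤ) ≤ k + 1) (k + 1) with hMdef
      have hF0 : F ((0:ℕ):ℤ) = 1 := by decide
      have hFM : F (M:ℤ) ≤ k + 1 := by
        rcases Nat.eq_zero_or_pos M with h | h
        · rw [h]; omega
        · exact Nat.findGreatest_spec (P := fun i => F (i:ℤ) ≤ k + 1) (Nat.zero_le _) (by omega)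
      have hMle : M + 1 ≤ k + 1 := by
        have := le_Fn M
        omega
      have hlt : k + 1 < F ((M + 1 : ℕ):ℤ) := by
        by_contra hc
        push_neg at hc
        have := Nat.le_findGreatest (P := fun i => F (i:ℤ) ≤ k + 1) hMle hc
        omega
      have hFMpos := Fn_pos M
      obtain ⟨hsum, hvalid, hbd⟩ := ih (k + 1 - F (M:ℤ)) (by omega)
      set R := zeckSet (k + 1 - F (M:ℤ)) with hR
      have hRlt : ∀ j ∈ R, j + 2 ≤ M := by
        intro j hj
        have hj1 := hbd j hj
        by_cases h2 : 2 ≤ M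
        · -- k+1 - F M < F (M-1)
          have hrec : F ((M - 1 : ℕ):ℤ) + F (M:ℤ) = F ((M + 1 : ℕ):ℤ) := by
            have := Fn_rec (M-1)
            rw [show M - 1 + 2 = M + 1 by omega, show M - 1 + 1 = M by omega] at this
            omega
          have hjlt : F (j:ℤ) < F ((M - 1 : ℕ):ℤ) := by omega
          by_contra hc
          have : F ((M - 1 : ℕ):ℤ) ≤ F (j:ℤ) := Fn_mono (by omega)
          omega
        · -- M ≤ 1 : then k + 1 - F M = 0, impossible since F j ≥ 1
          exfalso
          have h0 : k + 1 - F (M:ℤ) = 0 := by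
            obtain hM | hM : M = 0 ∨ M = 1 := by omega
            · rw [hM] at hlt ⊢
              have e1 : F ((0 + 1 : ℕ):ℤ) = 2 := by decide
              have e0 : F ((0:ℕ):ℤ) = 1 := by decide
              omega
            · rw [hM] at hlt hFM ⊢
              have e1 : F ((1 + 1 : ℕ):ℤ) = 3 := by decide
              have e0 : F ((1:ℕ):ℤ) = 2 := by decide
              omega
          have := Fn_pos j
          omega
      have hMR : M ∉ R := fun hc => by have := hRlt M hc; omega
      refine ⟨?_, ?_, ?_⟩
      · rw [Finset.sum_insert hMR, hsum]
        omega
      · intro j hj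
        rcases Finset.mem_insert.mp hj with rfl | hjR
        · intro hc
          rcases Finset.mem_insert.mp hc with h | h
          · omega
          · have := hRlt _ h; omega
        · intro hc
          rcases Finset.mem_insert.mp hc with h | h
          · have := hRlt _ hjR; omega
          · exact hvalid j hjR h
      · intro j hj
        rcases Finset.mem_insert.mp hj with rfl | hjR
        · exact hFM
        · have := hbd j hjR; omega

lemma zeck_eq : ∀ n : ℕ, ∀ S : Finset ℕ, Valid S → ∑ j ∈ S, F (j:ℤ) = n → zeckSet n = S := by
  intro n
  induction n using Nat.strong_induction_on with
  | _ n ih =>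
    intro S hS hsum
    rcases S.eq_empty_or_nonempty with rfl | hne
    · simp at hsum
      rw [← hsum, zeckSet]
    · set m := S.max' hne with hm
      have hmS : m ∈ S := S.max'_mem hne
      have hFm : F (m:ℤ) ≤ n := by
        rw [← hsum]
        exact Finset.single_le_sum (s := S) (f := fun j : ℕ => F (j:ℤ)) (fun j _ => Nat.zero_le _) hmS
      have hpos : 1 ≤ n := le_trans (Fn_pos m) hFm
      have hlt : n < F ((m + 1 : ℕ):ℤ) := by
        rw [← hsum]
        exact sum_lt m S hS (fun j hj => S.le_max' j hj)
      obtain ⟨k, rfl⟩ : ∃ k, n = k + 1 := ⟨n - 1, by omega⟩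
      have hfg : Nat.findGreatest (fun i => F (i:ℤ) ≤ k + 1) (k + 1) = m := by
        apply le_antisymm
        · by_contra hc
          push_neg at hc
          set g := Nat.findGreatest (fun i => F (i:ℤ) ≤ k + 1) (k + 1) with hg
          have hgb : g ≤ k + 1 := Nat.findGreatest_le (k+1)
          have hgP : F (g:ℤ) ≤ k + 1 := by
            rcases Nat.eq_zero_or_pos g with h | h
            · exfalso; omega
            · exact Nat.findGreatest_spec (P := fun i => F (i:ℤ) ≤ k + 1) (Nat.zero_le _) (by
                have : F ((0:ℕ):ℤ) = 1 := by decide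
                omega)
          have : F ((m + 1 : ℕ):ℤ) ≤ F (g:ℤ) := Fn_mono (by omega)
          omega
        · apply Nat.le_findGreatest
          · have := le_Fn m; omega
          · exact hFm
      rw [zeckSet, hfg]
      have hsplit : S = insert m (S.erase m) := (Finset.insert_erase hmS).symm
      have hmem : m ∉ S.erase m := Finset.notMem_erase m S
      have hrest : ∑ j ∈ S.erase m, F (j:ℤ) = k + 1 - F (m:ℤ) := by
        conv_rhs => rw [← hsum]
        conv_lhs => rw [show (∑ j ∈ S.erase m, F (j:ℤ)) =
          (∑ j ∈ insert m (S.erase m), F (j:ℤ)) - F (m:ℤ) by rw [Finset.sum_insert hmem]; omega]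
        rw [← hsplit]
      have hrec := ih (k + 1 - F (m:ℤ)) (by have := Fn_pos m; omega) (S.erase m)
        (fun j hj hj' => hS j (Finset.mem_of_mem_erase hj) (Finset.mem_of_mem_erase hj'))
        hrest
      rw [hrec, ← hsplit]


lemma phi_sq : phi ^ 2 = phi + 1 := by
  have h5 : Real.sqrt 5 ^ 2 = 5 := Real.sq_sqrt (by norm_num)
  unfold phi
  field_simp
  nlinarith [h5]

lemma one_lt_phi : 1 < phi := by
  have h5 : Real.sqrt 5 ^ 2 = 5 := Real.sq_sqrt (by norm_num)
  have h5' : 0 ≤ Real.sqrt 5 := Real.sqrt_nonneg 5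
  unfold phi
  nlinarith [h5, h5']

lemma phi_pos : 0 < phi := lt_trans one_pos one_lt_phi

lemma phi_ne : phi ≠ 0 := ne_of_gt phi_pos

lemma phi_rec (k : ℕ) : phi ^ (k + 2) = phi ^ k + phi ^ (k + 1) := by
  have : phi ^ (k + 2) = phi ^ k * phi ^ 2 := by ring
  rw [this, phi_sq]
  ring

lemma cascade : ∀ N : ℕ, ∀ S : Finset ℕ, S.card ≤ N → Valid S → ∀ k : ℕ, k ∉ S →
    (∀ j ∈ S, j + 1 ≠ k) →
    ∃ T : Finset ℕ, Valid T ∧ (∀ j ∈ T, j ∈ S ∨ k ≤ j) ∧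
      (∑ j ∈ T, F (j:ℤ)) = F (k:ℤ) + ∑ j ∈ S, F (j:ℤ) ∧
      (∑ j ∈ T, phi ^ j) = phi ^ k + ∑ j ∈ S, phi ^ j := by
  intro N
  induction N with
  | zero =>
    intro S hcard hS k hk hk1
    have : S = ∅ := Finset.card_eq_zero.mp (by omega)
    subst this
    exact ⟨{k}, by intro j hj hj'; simp at hj hj'; omega, by simp, by simp, by simp⟩
  | succ N ih =>
    intro S hcard hS k hk hk1
    by_cases hk2 : k + 1 ∈ S
    · have hcard' : (S.erase (k+1)).card ≤ N := by
        rw [Finset.card_erase_of_mem hk2]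
        omega
      have hval' : Valid (S.erase (k+1)) := fun j hj hj' =>
        hS j (Finset.mem_of_mem_erase hj) (Finset.mem_of_mem_erase hj')
      have hnk2 : k + 2 ∉ S.erase (k+1) := fun hc =>
        hS (k+1) hk2 (Finset.mem_of_mem_erase hc)
      have hnk2' : ∀ j ∈ S.erase (k+1), j + 1 ≠ k + 2 := by
        intro j hj hc
        have : j = k + 1 := by omega
        exact Finset.notMem_erase (k+1) S (this ▸ hj)
      obtain ⟨T, tv, tsub, tF, tphi⟩ := ih (S.erase (k+1)) hcard' hval' (k+2) hnk2 hnk2'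
      have hsplit : S = insert (k+1) (S.erase (k+1)) := (Finset.insert_erase hk2).symm
      have hmem : (k+1) ∉ S.erase (k+1) := Finset.notMem_erase _ S
      refine ⟨T, tv, ?_, ?_, ?_⟩
      · intro j hj
        rcases tsub j hj with h | h
        · exact Or.inl (Finset.mem_of_mem_erase h)
        · exact Or.inr (by omega)
      · rw [tF]
        conv_rhs => rw [hsplit]
        rw [Finset.sum_insert hmem]
        have := Fn_rec k
        omega
      · rw [tphi]
        conv_rhs => rw [hsplit]
        rw [Finset.sum_insert hmem]
        have := phi_rec k
        linarith [this]
    · have hmem : k ∉ S := hk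
      refine ⟨insert k S, ?_, ?_, ?_, ?_⟩
      · intro j hj hj'
        rcases Finset.mem_insert.mp hj with rfl | hjS
        · rcases Finset.mem_insert.mp hj' with h | h
          · omega
          · exact hk2 h
        · rcases Finset.mem_insert.mp hj' with h | h
          · exact hk1 j hjS h
          · exact hS j hjS h
      · intro j hj
        rcases Finset.mem_insert.mp hj with rfl | hjS
        · exact Or.inr le_rfl
        · exact Or.inl hjS
      · rw [Finset.sum_insert hmem]
      · rw [Finset.sum_insert hmem]

lemma F_up (j : ℕ) : F ((j:ℤ) + 1) = F ((j + 1 : ℕ):ℤ) := by norm_cast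

lemma F_down (j : ℕ) (h : 1 ≤ j) : F ((j:ℤ) + (-1)) = F ((j - 1 : ℕ):ℤ) := by congr 1; omega

lemma zbar_nonneg (n : ℕ) : 0 ≤ zbar n :=
  Finset.sum_nonneg fun j _ => pow_nonneg (le_of_lt phi_pos) j

lemma zbar_add_F (n k : ℕ) (hk : k ∉ zeckSet n) (hk1 : ∀ j ∈ zeckSet n, j + 1 ≠ k) :
    zbar (n + F (k:ℤ)) = phi ^ k + zbar n ∧
    ∀ j ∈ zeckSet (n + F (k:ℤ)), j ∈ zeckSet n ∨ k ≤ j := by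
  obtain ⟨hsum, hvalid, -⟩ := zeck_spec n
  obtain ⟨T, tv, tsub, tF, tphi⟩ := cascade (zeckSet n).card (zeckSet n) le_rfl hvalid k hk hk1
  have hT : zeckSet (n + F (k:ℤ)) = T := by
    apply zeck_eq
    · exact tv
    · rw [tF, hsum]; omega
  refine ⟨?_, by rw [hT]; exact tsub⟩
  unfold zbar
  rw [hT, tphi]

lemma shift1 (a : ℕ) :
    zeckSet (zshift a 1) = (zeckSet a).image (· + 1) ∧ zbar (zshift a 1) = phi * zbar a := by
  obtain ⟨-, hvalid, -⟩ := zeck_spec a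
  have hinj : ∀ x ∈ zeckSet a, ∀ y ∈ zeckSet a, (fun t => t + 1) x = (fun t => t + 1) y → x = y := by
    intro x _ y _ h
    have h' : x + 1 = y + 1 := by simpa using h
    omega
  have himg : Valid ((zeckSet a).image (· + 1)) := by
    intro j hj hj'
    simp only [Finset.mem_image] at hj hj'
    obtain ⟨i, hi, rfl⟩ := hj
    obtain ⟨i', hi', he⟩ := hj'
    have : i' = i + 1 := by omega
    exact hvalid i hi (this ▸ hi')
  have h1 : zshift a 1 = ∑ j ∈ zeckSet a, F ((j + 1 : ℕ):ℤ) := by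
    unfold zshift
    exact Finset.sum_congr rfl fun j _ => F_up j
  have h2 : ∑ j ∈ (zeckSet a).image (fun t : ℕ => t + 1), F (j:ℤ)
      = ∑ j ∈ zeckSet a, F ((j + 1 : ℕ):ℤ) :=
    Finset.sum_image (f := fun j : ℕ => F (j:ℤ)) hinj
  have hz : zeckSet (zshift a 1) = (zeckSet a).image (· + 1) := by
    rw [h1, ← h2]; exact zeck_eq _ _ himg rfl
  refine ⟨hz, ?_⟩
  have h3 : ∑ j ∈ (zeckSet a).image (· + 1), phi ^ j
      = ∑ j ∈ zeckSet a, phi ^ (j + 1) :=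
    Finset.sum_image (f := fun j : ℕ => phi ^ j) hinj
  unfold zbar
  rw [hz, h3, Finset.mul_sum]
  exact Finset.sum_congr rfl fun j _ => by ring

lemma shiftneg (a : ℕ) (hmin : ∀ j ∈ zeckSet a, 3 ≤ j) :
    zeckSet (zshift a (-1)) = (zeckSet a).image (· - 1) ∧
    zbar (zshift a (-1)) = zbar a / phi := by
  obtain ⟨-, hvalid, -⟩ := zeck_spec a
  have hinj : ∀ x ∈ zeckSet a, ∀ y ∈ zeckSet a, (fun t => t - 1) x = (fun t => t - 1) y → x = y := by
    intro x hx y hy h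
    have h' : x - 1 = y - 1 := by simpa using h
    have := hmin x hx; have := hmin y hy; omega
  have himg : Valid ((zeckSet a).image (· - 1)) := by
    intro j hj hj'
    simp only [Finset.mem_image] at hj hj'
    obtain ⟨i, hi, rfl⟩ := hj
    obtain ⟨i', hi', he⟩ := hj'
    have h3 := hmin i hi
    have h3' := hmin i' hi'
    have : i' = i + 1 := by omega
    exact hvalid i hi (this ▸ hi')
  have h1 : zshift a (-1) = ∑ j ∈ zeckSet a, F ((j - 1 : ℕ):ℤ) := by
    unfold zshift
    exact Finset.sum_congr rfl fun j hj => F_down j (by have := hmin j hj; omega)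
  have h2 : ∑ j ∈ (zeckSet a).image (fun t : ℕ => t - 1), F (j:ℤ)
      = ∑ j ∈ zeckSet a, F ((j - 1 : ℕ):ℤ) :=
    Finset.sum_image (f := fun j : ℕ => F (j:ℤ)) hinj
  have hz : zeckSet (zshift a (-1)) = (zeckSet a).image (· - 1) := by
    rw [h1, ← h2]; exact zeck_eq _ _ himg rfl
  refine ⟨hz, ?_⟩
  have h3 : ∑ j ∈ (zeckSet a).image (· - 1), phi ^ j
      = ∑ j ∈ zeckSet a, phi ^ (j - 1) :=
    Finset.sum_image (f := fun j : ℕ => phi ^ j) hinj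
  unfold zbar
  rw [hz, h3, eq_div_iff phi_ne, Finset.sum_mul]
  refine Finset.sum_congr rfl fun j hj => ?_
  have := hmin j hj
  rw [← pow_succ]
  congr 1
  omega

/-- Refinement identities for the elementary intervals, as subsets of ℝ:
(i) `I_0(a;m) = I_0(a⊙φ; m+1) ∪ I_1(a⊙φ; m+1)`;
(ii) `I_1(a;m) = I_2(a⊙φ; m+1)`;
(iii) if `d_2 = 0` and `a+3 ≤ F^m`, then
`I_2(a;m) = I_1(a⊙φ^(−1); m−1) = I_0(a⊙φ+3; m+1) ∪ I_1(a⊙φ+3; m+1)`. -/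
theorem statement5 (m a : ℕ) (ha : a < F m)
    (h0 : 0 ∉ zeckSet a) (h1 : 1 ∉ zeckSet a) :
    (Set.Ico (zbar a / phi ^ (m : ℤ)) (zbar (a + 1) / phi ^ (m : ℤ)) =
        Set.Ico (zbar (zshift a 1) / phi ^ ((m : ℤ) + 1))
            (zbar (zshift a 1 + 1) / phi ^ ((m : ℤ) + 1)) ∪
          Set.Ico (zbar (zshift a 1 + 1) / phi ^ ((m : ℤ) + 1))
            (zbar (zshift a 1 + 2) / phi ^ ((m : ℤ) + 1))) ∧
    (Set.Ico (zbar (a + 1) / phi ^ (m : ℤ)) (zbar (a + 2) / phi ^ (m : ℤ)) =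
        Set.Ico (zbar (zshift a 1 + 2) / phi ^ ((m : ℤ) + 1))
          (zbar (zshift a 1 + 3) / phi ^ ((m : ℤ) + 1))) ∧
    (2 ∉ zeckSet a → a + 3 ≤ F m →
      Set.Ico (zbar (a + 2) / phi ^ (m : ℤ)) (zbar (a + 3) / phi ^ (m : ℤ)) =
          Set.Ico (zbar (zshift a (-1) + 1) / phi ^ ((m : ℤ) - 1))
            (zbar (zshift a (-1) + 2) / phi ^ ((m : ℤ) - 1)) ∧
      Set.Ico (zbar (a + 2) / phi ^ (m : ℤ)) (zbar (a + 3) / phi ^ (m : ℤ)) =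
          Set.Ico (zbar (zshift a 1 + 3) / phi ^ ((m : ℤ) + 1))
              (zbar (zshift a 1 + 4) / phi ^ ((m : ℤ) + 1)) ∪
            Set.Ico (zbar (zshift a 1 + 4) / phi ^ ((m : ℤ) + 1))
              (zbar (zshift a 1 + 5) / phi ^ ((m : ℤ) + 1))) := by
  obtain ⟨-, hvalidA, -⟩ := zeck_spec a
  have hminA : ∀ j ∈ zeckSet a, 2 ≤ j := by
    intro j hj
    rcases Nat.lt_or_ge j 2 with h | h
    · interval_cases j
      · exact absurd hj h0
      · exact absurd hj h1
    · exact h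
  have hF0 : F ((0:ℕ):ℤ) = 1 := by decide
  have hF1 : F ((1:ℕ):ℤ) = 2 := by decide
  have hF2 : F ((2:ℕ):ℤ) = 3 := by decide
  have hF3 : F ((3:ℕ):ℤ) = 5 := by decide
  have hb0 : 0 ≤ zbar a := zbar_nonneg a
  have hphi1 := one_lt_phi
  have e1 : zbar (a + 1) = 1 + zbar a := by
    have := (zbar_add_F a 0 h0 (fun j hj => by omega)).1
    rw [hF0] at this
    simpa using this
  have e2 : zbar (a + 2) = phi + zbar a := by
    have := (zbar_add_F a 1 h1 (fun j hj hc => by have := hminA j hj; omega)).1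
    rw [hF1] at this
    simpa using this
  obtain ⟨hzs, es⟩ := shift1 a
  have hminS : ∀ j ∈ zeckSet (zshift a 1), 3 ≤ j := by
    intro j hj
    rw [hzs] at hj
    simp only [Finset.mem_image] at hj
    obtain ⟨i, hi, rfl⟩ := hj
    have := hminA i hi
    omega
  have h0s : 0 ∉ zeckSet (zshift a 1) := fun hc => by have := hminS 0 hc; omega
  have h1s : 1 ∉ zeckSet (zshift a 1) := fun hc => by have := hminS 1 hc; omega
  have h2s : 2 ∉ zeckSet (zshift a 1) := fun hc => by have := hminS 2 hc; omega
  have e3 : zbar (zshift a 1 + 1) = 1 + phi * zbar a := by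
    have := (zbar_add_F (zshift a 1) 0 h0s (fun j hj => by omega)).1
    rw [hF0, es] at this
    simpa using this
  have e4 : zbar (zshift a 1 + 2) = phi + phi * zbar a := by
    have := (zbar_add_F (zshift a 1) 1 h1s (fun j hj hc => by have := hminS j hj; omega)).1
    rw [hF1, es] at this
    simpa using this
  have ekey5 := zbar_add_F (zshift a 1) 2 h2s (fun j hj hc => by have := hminS j hj; omega)
  rw [hF2, es] at ekey5
  have e5 : zbar (zshift a 1 + 3) = phi ^ 2 + phi * zbar a := ekey5.1
  have hP : (0:ℝ) < phi ^ (m:ℤ) := zpow_pos phi_pos _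
  have hP1 : (0:ℝ) < phi ^ ((m:ℤ) + 1) := zpow_pos phi_pos _
  have hPm : (0:ℝ) < phi ^ ((m:ℤ) - 1) := zpow_pos phi_pos _
  have hzadd : phi ^ ((m:ℤ) + 1) = phi ^ (m:ℤ) * phi := zpow_add_one₀ phi_ne m
  have hzsub : phi ^ ((m:ℤ) - 1) = phi ^ (m:ℤ) / phi :=
    (zpow_sub_one₀ phi_ne m).trans (by rw [div_eq_mul_inv])
  refine ⟨?_, ?_, ?_⟩
  · have q1 : zbar a / phi ^ (m:ℤ) = zbar (zshift a 1) / phi ^ ((m:ℤ) + 1) := by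
      rw [div_eq_div_iff (ne_of_gt hP) (ne_of_gt hP1), es, hzadd]; ring
    have q2 : zbar (a + 1) / phi ^ (m:ℤ) = zbar (zshift a 1 + 2) / phi ^ ((m:ℤ) + 1) := by
      rw [div_eq_div_iff (ne_of_gt hP) (ne_of_gt hP1), e1, e4, hzadd]; ring
    rw [Set.Ico_union_Ico_eq_Ico
      ((div_le_div_iff_of_pos_right hP1).mpr (by rw [es, e3]; linarith))
      ((div_le_div_iff_of_pos_right hP1).mpr (by rw [e3, e4]; linarith)), q1, q2]
  · have q1 : zbar (a + 1) / phi ^ (m:ℤ) = zbar (zshift a 1 + 2) / phi ^ ((m:ℤ) + 1) := by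
      rw [div_eq_div_iff (ne_of_gt hP) (ne_of_gt hP1), e1, e4, hzadd]; ring
    have q2 : zbar (a + 2) / phi ^ (m:ℤ) = zbar (zshift a 1 + 3) / phi ^ ((m:ℤ) + 1) := by
      rw [div_eq_div_iff (ne_of_gt hP) (ne_of_gt hP1), e2, e5, hzadd]; ring
    rw [q1, q2]
  · intro h2 _
    have hminA3 : ∀ j ∈ zeckSet a, 3 ≤ j := by
      intro j hj
      have := hminA j hj
      rcases Nat.lt_or_ge j 3 with h | h
      · interval_cases j
        · exact absurd hj h2
      · exact h
    have e2a : zbar (a + 3) = phi ^ 2 + zbar a := by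
      have := (zbar_add_F a 2 h2 (fun j hj hc => by have := hminA j hj; omega)).1
      rw [hF2] at this
      simpa using this
    obtain ⟨hzt, et⟩ := shiftneg a hminA3
    have hminT : ∀ j ∈ zeckSet (zshift a (-1)), 2 ≤ j := by
      intro j hj
      rw [hzt] at hj
      simp only [Finset.mem_image] at hj
      obtain ⟨i, hi, rfl⟩ := hj
      have := hminA3 i hi
      omega
    have h0t : 0 ∉ zeckSet (zshift a (-1)) := fun hc => by have := hminT 0 hc; omega
    have h1t : 1 ∉ zeckSet (zshift a (-1)) := fun hc => by have := hminT 1 hc; omega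
    have e8 : zbar (zshift a (-1) + 1) = 1 + zbar a / phi := by
      have := (zbar_add_F (zshift a (-1)) 0 h0t (fun j hj => by omega)).1
      rw [hF0, et] at this
      simpa using this
    have e9 : zbar (zshift a (-1) + 2) = phi + zbar a / phi := by
      have := (zbar_add_F (zshift a (-1)) 1 h1t (fun j hj hc => by have := hminT j hj; omega)).1
      rw [hF1, et] at this
      simpa using this
    have h0s3 : 0 ∉ zeckSet (zshift a 1 + 3) := by
      intro hc
      rcases ekey5.2 0 hc with h | h
      · exact h0s h
      · omega
    have e6 : zbar (zshift a 1 + 4) = 1 + (phi ^ 2 + phi * zbar a) := by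
      have := (zbar_add_F (zshift a 1 + 3) 0 h0s3 (fun j hj => by omega)).1
      rw [hF0, e5] at this
      rw [show zshift a 1 + 4 = zshift a 1 + 3 + 1 by omega]
      simpa using this
    have h3s : 3 ∉ zeckSet (zshift a 1) := by
      intro hc
      rw [hzs] at hc
      simp only [Finset.mem_image] at hc
      obtain ⟨i, hi, he⟩ := hc
      have : i = 2 := by omega
      exact h2 (this ▸ hi)
    have e7 : zbar (zshift a 1 + 5) = phi ^ 3 + phi * zbar a := by
      have := (zbar_add_F (zshift a 1) 3 h3s (fun j hj hc => by have := hminS j hj; omega)).1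
      rw [hF3, es] at this
      simpa using this
    have hcube : phi ^ 3 = phi ^ 2 + phi := by linear_combination phi * phi_sq
    constructor
    · have q1 : zbar (a + 2) / phi ^ (m:ℤ) = zbar (zshift a (-1) + 1) / phi ^ ((m:ℤ) - 1) := by
        rw [div_eq_div_iff (ne_of_gt hP) (ne_of_gt hPm), e2, e8, hzsub]
        field_simp <;> ring
      have q2 : zbar (a + 3) / phi ^ (m:ℤ) = zbar (zshift a (-1) + 2) / phi ^ ((m:ℤ) - 1) := by
        rw [div_eq_div_iff (ne_of_gt hP) (ne_of_gt hPm), e2a, e9, hzsub]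
        field_simp <;> ring
      rw [q1, q2]
    · have q1 : zbar (a + 2) / phi ^ (m:ℤ) = zbar (zshift a 1 + 3) / phi ^ ((m:ℤ) + 1) := by
        rw [div_eq_div_iff (ne_of_gt hP) (ne_of_gt hP1), e2, e5, hzadd]; ring
      have q2 : zbar (a + 3) / phi ^ (m:ℤ) = zbar (zshift a 1 + 5) / phi ^ ((m:ℤ) + 1) := by
        rw [div_eq_div_iff (ne_of_gt hP) (ne_of_gt hP1), e2a, e7, hzadd]; ring
      rw [Set.Ico_union_Ico_eq_Ico
        ((div_le_div_iff_of_pos_right hP1).mpr (by rw [e5, e6]; linarith))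
        ((div_le_div_iff_of_pos_right hP1).mpr (by rw [e6, e7]; nlinarith [hb0])), q1, q2]
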